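/- Let A be a (not necessarily commutative) algebra over a field of characteristic zero, let a₁,…,aₙ be derivations of A, and let 𝔖(a₁∘…∘aₙ) denote the symmetrization (1/n!)·∑_{σ∈Sₙ} a_{σ(1)}∘…∘a_{σ(n)}. Then for all f, g ∈ A, 𝔖(a₁∘…∘aₙ)(f·g) = ∑_{(K,L)} 𝔖(a_K)(f)·𝔖(a_L)(g), where the sum runs over all ordered pairs (K,L) of disjoint subsets of {1,…,n} with K ∪ L = {1,…,n}, and a_K denotes the composition of the aᵢ with i ∈ K in increasing order. -/

import Mathlib

open scoped BigOperators

/-- Symmetrization `𝔖(l)` of a list of endomorphisms: `(1/len!) · ∑_{orderings} composition`. -/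
noncomputable def symList {K A : Type*} [Field K] [CharZero K] [Ring A] [Algebra K A]
    (l : List (Module.End K A)) : Module.End K A :=
  ((l.length.factorial : K)⁻¹) • (l.permutations.map List.prod).sum

section Aux

set_option linter.unusedSectionVars false

variable {K A : Type*} [Field K] [CharZero K] [Ring A] [Algebra K A]

/-- Raw (unnormalized) permutation sum. -/
noncomputable def psum (l : List (Module.End K A)) : Module.End K A :=
  (l.permutations.map List.prod).sum

lemma symList_eq (l : List (Module.End K A)) :
    symList l = ((l.length.factorial : K)⁻¹) • psum l := rfl

lemma psum_perm {l l' : List (Module.End K A)} (h : l.Perm l') : psum l = psum l' :=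
  List.Perm.sum_eq ((h.permutations).map _)

lemma symList_perm {l l' : List (Module.End K A)} (h : l.Perm l') : symList l = symList l' := by
  rw [symList_eq, symList_eq, h.length_eq, psum_perm h]

variable {ι : Type*} [DecidableEq ι]

lemma psum_map_eq (a : ι → Module.End K A) (l : List ι) (hl : l.Nodup) (hne : l ≠ []) :
    psum (l.map a) = ∑ x ∈ l.toFinset, a x * psum ((l.erase x).map a) := by
  have key : ∀ (m : List ι), m.Nodup →
      psum (m.map a) = ∑ π ∈ m.permutations.toFinset, ((π.map a).prod) := by
    intro m hm
    rw [List.sum_toFinset _ (List.nodup_permutations m hm)]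
    rw [psum, ← List.map_permutations, List.map_map]
    rfl
  rw [key l hl]
  have hcongr : ∀ x ∈ l.toFinset, a x * psum ((l.erase x).map a)
      = ∑ π ∈ (l.erase x).permutations.toFinset, (a x * (π.map a).prod) := by
    intro x hx
    rw [key (l.erase x) (hl.erase x), Finset.mul_sum]
  rw [Finset.sum_congr rfl hcongr, Finset.sum_sigma']
  refine (Finset.sum_bij (fun p _ => p.1 :: p.2) ?_ ?_ ?_ ?_).symm
  · rintro ⟨x, τ⟩ hp
    simp only [Finset.mem_sigma, List.mem_toFinset, List.mem_permutations] at hp ⊢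
    exact List.cons_perm_iff_perm_erase.2 ⟨hp.1, hp.2⟩
  · rintro ⟨x, τ⟩ _ ⟨y, σ⟩ _ h
    simp only [List.cons.injEq] at h
    obtain ⟨rfl, rfl⟩ := h
    rfl
  · intro π hπ
    rw [List.mem_toFinset, List.mem_permutations] at hπ
    cases π with
    | nil => exact absurd hπ.nil_eq.symm hne
    | cons x τ =>
      rw [List.cons_perm_iff_perm_erase] at hπ
      exact ⟨⟨x, τ⟩, by simp only [Finset.mem_sigma, List.mem_toFinset,
        List.mem_permutations]; exact hπ, rfl⟩
  · rintro ⟨x, τ⟩ _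
    simp [List.prod_cons]

variable [LinearOrder ι]

/-- `𝔖` attached to a finite set of indices. -/
noncomputable def Tl (a : ι → Module.End K A) (s : Finset ι) : Module.End K A :=
  symList ((s.sort (· ≤ ·)).map a)

lemma Tl_empty (a : ι → Module.End K A) : Tl a (∅ : Finset ι) = 1 := by
  simp [Tl, Finset.sort_empty, symList]

lemma sort_erase_perm (s : Finset ι) (x : ι) :
    ((s.sort (· ≤ ·)).erase x).Perm ((s.erase x).sort (· ≤ ·)) := by
  rw [← Multiset.coe_eq_coe, ← Multiset.coe_erase, Finset.sort_eq, Finset.sort_eq,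
    Finset.erase_val]

lemma psum_Tl (a : ι → Module.End K A) (s : Finset ι) :
    psum ((s.sort (· ≤ ·)).map a) = (s.card.factorial : K) • Tl a s := by
  have hlen : ((s.sort (· ≤ ·)).map a).length = s.card := by
    rw [List.length_map, Finset.length_sort]
  rw [Tl, symList_eq, hlen, smul_smul, mul_inv_cancel₀, one_smul]
  exact_mod_cast Nat.cast_ne_zero.2 s.card.factorial_ne_zero

lemma key1 (a : ι → Module.End K A) (s : Finset ι) :
    (s.card : K) • Tl a s = ∑ j ∈ s, a j * Tl a (s.erase j) := by
  rcases s.eq_empty_or_nonempty with rfl | hs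
  · simp
  · obtain ⟨m, hm⟩ := Nat.exists_eq_succ_of_ne_zero (Finset.card_ne_zero.2 hs)
    have hne : s.sort (· ≤ ·) ≠ [] := by
      intro h
      have hlen := Finset.length_sort (α := ι) (· ≤ ·) (s := s)
      rw [h] at hlen
      simp [hm] at hlen
    have h2 : ∀ x ∈ s, psum (((s.erase x).sort (· ≤ ·)).map a)
        = (m.factorial : K) • Tl a (s.erase x) := by
      intro x hx
      rw [psum_Tl, Finset.card_erase_of_mem hx, hm]
      rfl
    have h1 : (s.card.factorial : K) • Tl a s
        = (m.factorial : K) • ∑ x ∈ s, a x * Tl a (s.erase x) := by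
      rw [← psum_Tl, psum_map_eq a _ (Finset.sort_nodup s _) hne, Finset.sort_toFinset,
        Finset.smul_sum]
      refine Finset.sum_congr rfl fun x hx => ?_
      rw [psum_perm ((sort_erase_perm s x).map a), h2 x hx, mul_smul_comm]
    have hfac : (s.card.factorial : K) = (s.card : K) * (m.factorial : K) := by
      rw [hm, Nat.factorial_succ]
      push_cast
      ring
    rw [hfac, mul_smul] at h1
    have hm0 : (m.factorial : K) ≠ 0 := Nat.cast_ne_zero.2 m.factorial_ne_zero
    calc (s.card : K) • Tl a s
        = (m.factorial : K)⁻¹ • (m.factorial : K) • (s.card : K) • Tl a s := by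
          rw [inv_smul_smul₀ hm0]
      _ = (m.factorial : K)⁻¹ • (m.factorial : K) •
            ∑ j ∈ s, a j * Tl a (s.erase j) := by
          rw [smul_comm (m.factorial : K) ((s.card : K)), h1]
      _ = ∑ j ∈ s, a j * Tl a (s.erase j) := inv_smul_smul₀ hm0 _

lemma key1_apply (a : ι → Module.End K A) (s : Finset ι) (x : A) :
    (s.card : K) • Tl a s x = ∑ j ∈ s, a j (Tl a (s.erase j) x) := by
  have h := congrArg (fun T : Module.End K A => T x) (key1 a s)
  simpa [LinearMap.smul_apply, LinearMap.sum_apply, Module.End.mul_apply] using h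

lemma main (a : ι → Module.End K A)
    (ha : ∀ i, ∀ f g : A, a i (f * g) = a i f * g + f * a i g) (f g : A) :
    ∀ (c : ℕ) (s : Finset ι), s.card = c →
      Tl a s (f * g) = ∑ P ∈ s.powerset, Tl a P f * Tl a (s \ P) g := by
  intro c
  induction c with
  | zero =>
    intro s hs
    rw [Finset.card_eq_zero] at hs
    subst hs
    simp [Tl_empty, Module.End.one_apply]
  | succ m IH =>
    intro s hs
    have hs0 : ((s.card : K)) ≠ 0 := by
      rw [hs]; exact Nat.cast_ne_zero.2 (Nat.succ_ne_zero m)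
    have step1 : (s.card : K) • Tl a s (f * g) = ∑ j ∈ s, a j (Tl a (s.erase j) (f * g)) :=
      key1_apply a s (f * g)
    have step2 : ∀ j ∈ s, a j (Tl a (s.erase j) (f * g))
        = ∑ P ∈ (s.erase j).powerset,
            (a j (Tl a P f) * Tl a ((s.erase j) \ P) g
              + Tl a P f * a j (Tl a ((s.erase j) \ P) g)) := by
      intro j hj
      rw [IH (s.erase j) (by rw [Finset.card_erase_of_mem hj, hs]; rfl), map_sum]
      exact Finset.sum_congr rfl fun P _ => ha j _ _
    -- reindexing, part A
    have reA : ∑ j ∈ s, ∑ P ∈ (s.erase j).powerset,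
          a j (Tl a P f) * Tl a ((s.erase j) \ P) g
        = ∑ P ∈ s.powerset, ∑ j ∈ P, a j (Tl a (P.erase j) f) * Tl a (s \ P) g := by
      rw [Finset.sum_sigma', Finset.sum_sigma']
      refine Finset.sum_nbij' (fun p => ⟨insert p.1 p.2, p.1⟩) (fun q => ⟨q.2, q.1.erase q.2⟩)
        ?_ ?_ ?_ ?_ ?_
      · rintro ⟨j, P⟩ hp
        simp only [Finset.mem_sigma, Finset.mem_powerset] at hp ⊢
        exact ⟨Finset.insert_subset hp.1 (hp.2.trans (Finset.erase_subset _ _)),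
          Finset.mem_insert_self _ _⟩
      · rintro ⟨P, j⟩ hq
        simp only [Finset.mem_sigma, Finset.mem_powerset] at hq ⊢
        exact ⟨hq.1 hq.2, Finset.erase_subset_erase _ hq.1⟩
      · rintro ⟨j, P⟩ hp
        simp only [Finset.mem_sigma, Finset.mem_powerset] at hp
        have hjP : j ∉ P := fun h => (Finset.mem_erase.1 (hp.2 h)).1 rfl
        simp [Finset.erase_insert hjP]
      · rintro ⟨P, j⟩ hq
        simp only [Finset.mem_sigma, Finset.mem_powerset] at hq
        simp [Finset.insert_erase hq.2]
      · rintro ⟨j, P⟩ hp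
        simp only [Finset.mem_sigma, Finset.mem_powerset] at hp
        have hjP : j ∉ P := fun h => (Finset.mem_erase.1 (hp.2 h)).1 rfl
        have h1 : (insert j P).erase j = P := Finset.erase_insert hjP
        have h2 : (s.erase j) \ P = s \ insert j P := by
          ext x
          simp only [Finset.mem_sdiff, Finset.mem_erase, Finset.mem_insert]
          tauto
        simp only [h1, h2]
    -- reindexing, part B
    have reB : ∑ j ∈ s, ∑ P ∈ (s.erase j).powerset,
          Tl a P f * a j (Tl a ((s.erase j) \ P) g)
        = ∑ P ∈ s.powerset, ∑ j ∈ s \ P, Tl a P f * a j (Tl a ((s \ P).erase j) g) := by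
      rw [Finset.sum_sigma', Finset.sum_sigma']
      refine Finset.sum_nbij' (fun p => ⟨p.2, p.1⟩) (fun q => ⟨q.2, q.1⟩) ?_ ?_ ?_ ?_ ?_
      · rintro ⟨j, P⟩ hp
        simp only [Finset.mem_sigma, Finset.mem_powerset, Finset.mem_sdiff] at hp ⊢
        have := Finset.subset_erase.1 hp.2
        exact ⟨this.1, hp.1, this.2⟩
      · rintro ⟨P, j⟩ hq
        simp only [Finset.mem_sigma, Finset.mem_powerset, Finset.mem_sdiff] at hq ⊢
        exact ⟨hq.2.1, Finset.subset_erase.2 ⟨hq.1, hq.2.2⟩⟩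
      · rintro ⟨j, P⟩ _; rfl
      · rintro ⟨P, j⟩ _; rfl
      · rintro ⟨j, P⟩ hp
        simp only [Finset.mem_sigma, Finset.mem_powerset] at hp
        rw [Finset.erase_sdiff_comm]
    -- put things together
    have combined : (s.card : K) • Tl a s (f * g)
        = ∑ P ∈ s.powerset, (s.card : K) • (Tl a P f * Tl a (s \ P) g) := by
      rw [step1, Finset.sum_congr rfl step2]
      simp only [Finset.sum_add_distrib]
      rw [reA, reB]
      rw [← Finset.sum_add_distrib]
      refine Finset.sum_congr rfl fun P hP => ?_
      rw [Finset.mem_powerset] at hP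
      have hA : ∑ j ∈ P, a j (Tl a (P.erase j) f) * Tl a (s \ P) g
          = ((P.card : K) • Tl a P f) * Tl a (s \ P) g := by
        rw [← Finset.sum_mul, ← key1_apply]
      have hB : ∑ j ∈ s \ P, Tl a P f * a j (Tl a ((s \ P).erase j) g)
          = Tl a P f * (((s \ P).card : K) • Tl a (s \ P) g) := by
        rw [← Finset.mul_sum, ← key1_apply]
      rw [hA, hB, smul_mul_assoc, mul_smul_comm, ← add_smul]
      congr 1
      have := Finset.card_sdiff_add_card_eq_card hP
      push_cast [← this]
      ring
    rw [← Finset.smul_sum] at combined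
    exact smul_right_injective _ hs0 combined

end Aux

theorem stmt0 {K A : Type*} [Field K] [CharZero K] [Ring A] [Algebra K A]
    (n : ℕ) (a : Fin n → Module.End K A)
    (hderiv : ∀ i, ∀ f g : A, a i (f * g) = a i f * g + f * a i g)
    (f g : A) :
    symList ((List.finRange n).map a) (f * g) =
      ∑ K : Finset (Fin n),
        symList ((K.sort (· ≤ ·)).map a) f * symList ((Kᶜ.sort (· ≤ ·)).map a) g := by
  have hperm : ((List.finRange n).map a).Perm
      (((Finset.univ : Finset (Fin n)).sort (· ≤ ·)).map a) :=
    List.Perm.map a (List.perm_of_nodup_nodup_toFinset_eq (List.nodup_finRange n)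
      (Finset.sort_nodup _ _)
      (by rw [List.toFinset_finRange, Finset.sort_toFinset]))
  rw [symList_perm hperm]
  have h := main a hderiv f g (Finset.univ : Finset (Fin n)).card Finset.univ rfl
  rw [Finset.powerset_univ] at h
  have h2 : ∀ P : Finset (Fin n), Finset.univ \ P = Pᶜ := fun P =>
    (Finset.compl_eq_univ_sdiff P).symm
  simp only [h2] at h
  exact h
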